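/- Let $X$ be a metric space with bounded geometry and let $\phi: C^*_u(X)^n \to \mathcal{B}(\ell^2(X))$ be a bounded $n$-multilinear $\ell^\infty(X)$-multimodular map. Then the image of $\phi$ is contained in $C^*_u(X)$. -/

import Mathlib

/- Common setup: `ℓ²(X)`, matrix entries, propagation, approximation,
and the uniform Roe algebra as a set of bounded operators. -/

noncomputable section
open scoped InnerProductSpace
open Function

/-- `ℓ²(X)` with complex coefficients. -/
abbrev H2 (X : Type*) := lp (fun _ : X => ℂ) 2

/-- The canonical basis vector `δ_x` of `ℓ²(X)`. -/
def deltaV (X : Type*) (x : X) : H2 X :=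
  haveI := Classical.decEq X
  lp.single 2 x 1

/-- The matrix entry `a_{xy} = ⟪δ_x, a δ_y⟫` of a bounded operator on `ℓ²(X)`. -/
def entry {X : Type*} (a : H2 X →L[ℂ] H2 X) (x y : X) : ℂ :=
  ⟪deltaV X x, a (deltaV X y)⟫_ℂ

/-- `a` has propagation at most `r`. -/
def HasPropLE {X : Type*} [MetricSpace X] (a : H2 X →L[ℂ] H2 X) (r : ℝ) : Prop :=
  ∀ x y : X, dist x y > r → entry a x y = 0

/-- `a` can be `ε`-`r`-approximated: there is `b` of propagation at most `r`
with `‖a - b‖ ≤ ε`. -/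
def IsApprox {X : Type*} [MetricSpace X] (a : H2 X →L[ℂ] H2 X) (ε r : ℝ) : Prop :=
  ∃ b : H2 X →L[ℂ] H2 X, HasPropLE b r ∧ ‖a - b‖ ≤ ε

/-- The uniform Roe algebra of `X`, as the norm closure of the finite
propagation operators in `B(ℓ²(X))`. -/
def roeSet (X : Type*) [MetricSpace X] : Set (H2 X →L[ℂ] H2 X) :=
  closure {a | ∃ r : ℝ, HasPropLE a r}

/-- A bounded operator on `ℓ²(X)` is diagonal precisely when it is
multiplication by a function in `ℓ^∞(X)`. -/
def IsDiagonalOp {X : Type*} (d : H2 X →L[ℂ] H2 X) : Prop :=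
  ∀ x y : X, x ≠ y → entry d x y = 0

/-- `X` has bounded geometry: the cardinalities of `r`-balls are uniformly
finite for each `r`. -/
def BoundedGeometry (X : Type*) [MetricSpace X] : Prop :=
  ∀ r : ℝ, ∃ N : ℕ, ∀ x : X,
    (Metric.closedBall x r).Finite ∧ (Metric.closedBall x r).ncard ≤ N

/-- `φ` is `ℓ^∞(X)`-multimodular (on the uniform Roe algebra): for every
diagonal operator `d` (i.e. every multiplication operator by a function in
`ℓ^∞(X)`), `d` can be moved in and out of `φ` and across adjacent arguments. -/
def IsLinftyMultimodular {X : Type*} [MetricSpace X] (n : ℕ)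
    (φ : (Fin (n + 1) → (H2 X →L[ℂ] H2 X)) → (H2 X →L[ℂ] H2 X)) : Prop :=
  ∀ d : H2 X →L[ℂ] H2 X, IsDiagonalOp d →
    ∀ a : Fin (n + 1) → (H2 X →L[ℂ] H2 X), (∀ i, a i ∈ roeSet X) →
      (d * φ a = φ (Function.update a 0 (d * a 0)))
      ∧ (∀ (j : Fin (n + 1)) (h : (j : ℕ) + 1 < n + 1),
          φ (Function.update a j (a j * d))
            = φ (Function.update a ⟨(j : ℕ) + 1, h⟩ (d * a ⟨(j : ℕ) + 1, h⟩)))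
      ∧ (φ (Function.update a (Fin.last n) (a (Fin.last n) * d)) = φ a * d)

/-- `φ` is a bounded multilinear map on the uniform Roe algebra. -/
def IsBddMultilinearOnRoe {X : Type*} [MetricSpace X] (n : ℕ)
    (φ : (Fin n → (H2 X →L[ℂ] H2 X)) → (H2 X →L[ℂ] H2 X)) : Prop :=
  (∃ C : ℝ, ∀ a : Fin n → (H2 X →L[ℂ] H2 X), (∀ i, a i ∈ roeSet X) →
      ‖φ a‖ ≤ C * ∏ i, ‖a i‖)
  ∧ (∀ (a : Fin n → (H2 X →L[ℂ] H2 X)), (∀ i, a i ∈ roeSet X) →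
      ∀ (i : Fin n), ∀ x y : H2 X →L[ℂ] H2 X, x ∈ roeSet X → y ∈ roeSet X →
        φ (Function.update a i (x + y))
          = φ (Function.update a i x) + φ (Function.update a i y))
  ∧ (∀ (a : Fin n → (H2 X →L[ℂ] H2 X)), (∀ i, a i ∈ roeSet X) →
      ∀ (i : Fin n), ∀ (c : ℂ) (x : H2 X →L[ℂ] H2 X), x ∈ roeSet X →
        φ (Function.update a i (c • x)) = c • φ (Function.update a i x))

namespace RoeAux

variable {X : Type*}

local notation "Op" => (H2 X →L[ℂ] H2 X)

lemma inner_deltaV (x : X) (v : H2 X) : ⟪deltaV X x, v⟫_ℂ = v x := by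
  letI := Classical.decEq X
  rw [show deltaV X x = lp.single 2 x 1 from rfl, lp.inner_single_left]
  simp

lemma coord_eq (a : Op) (x y : X) : (a (deltaV X y)) x = entry a x y :=
  (inner_deltaV x _).symm

lemma deltaV_apply_self (x : X) : (deltaV X x) x = 1 := by
  letI := Classical.decEq X
  rw [show deltaV X x = lp.single 2 x 1 from rfl]
  simp [lp.single_apply_self]

lemma deltaV_apply_ne {x z : X} (h : z ≠ x) : (deltaV X x) z = 0 := by
  letI := Classical.decEq X
  rw [show deltaV X x = lp.single 2 x 1 from rfl]
  simp [lp.single_apply_ne _ _ _ h, Pi.single_apply, h]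

lemma hasSum_deltaV (v : H2 X) : HasSum (fun y : X => v y • deltaV X y) v := by
  letI := Classical.decEq X
  have hs := lp.hasSum_single (E := fun _ : X => ℂ) (p := 2) (by norm_num) v
  have he : (fun y : X => v y • deltaV X y) = fun y : X => lp.single 2 y (v y) := by
    funext y
    rw [show deltaV X y = lp.single 2 y 1 from rfl, ← lp.single_smul, smul_eq_mul, mul_one]
  rw [he]
  exact hs

lemma ext_of_entry {a b : Op} (h : ∀ x y : X, entry a x y = entry b x y) : a = b := by
  have hd : ∀ y, a (deltaV X y) = b (deltaV X y) := by
    intro y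
    apply lp.ext
    funext z
    have := h z y
    rw [← coord_eq, ← coord_eq] at this
    exact this
  refine ContinuousLinearMap.ext fun v => ?_
  have ha : HasSum (fun y : X => a (v y • deltaV X y)) (a v) := (hasSum_deltaV v).mapL a
  have hb : HasSum (fun y : X => b (v y • deltaV X y)) (b v) := (hasSum_deltaV v).mapL b
  have hfun : (fun y : X => a (v y • deltaV X y)) = fun y : X => b (v y • deltaV X y) := by
    funext y
    rw [map_smul, map_smul, hd y]
  exact ha.unique (hfun ▸ hb)

end RoeAux
namespace RoeAux2
open RoeAux

variable {X : Type*}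

local notation "Op" => (H2 X →L[ℂ] H2 X)

lemma entry_add (a b : Op) (x y : X) : entry (a + b) x y = entry a x y + entry b x y := by
  simp [entry, ContinuousLinearMap.add_apply, inner_add_right]

lemma entry_smul (c : ℂ) (a : Op) (x y : X) : entry (c • a) x y = c * entry a x y := by
  simp [entry, ContinuousLinearMap.smul_apply, inner_smul_right]

lemma entry_zero (x y : X) : entry (0 : Op) x y = 0 := by
  simp [entry]

lemma diag_apply_deltaV {d : Op} (hd : IsDiagonalOp d) (y : X) :
    d (deltaV X y) = entry d y y • deltaV X y := by
  apply lp.ext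
  funext z
  rw [lp.coeFn_smul, Pi.smul_apply, coord_eq, smul_eq_mul]
  by_cases h : z = y
  · subst h; rw [deltaV_apply_self, mul_one]
  · rw [deltaV_apply_ne h, mul_zero, hd z y h]

lemma entry_mul_diag_right (a : Op) {d : Op} (hd : IsDiagonalOp d) (x y : X) :
    entry (a * d) x y = entry d y y * entry a x y := by
  rw [entry, ContinuousLinearMap.mul_apply, diag_apply_deltaV hd, map_smul, inner_smul_right]
  rfl

lemma inner_diag_apply {d : Op} (hd : IsDiagonalOp d) (x : X) (w : H2 X) :
    ⟪deltaV X x, d w⟫_ℂ = entry d x x * w x := by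
  classical
  have hs : HasSum (fun z : X => (innerSL ℂ (deltaV X x)) (d (w z • deltaV X z)))
      ((innerSL ℂ (deltaV X x)) (d w)) :=
    ((hasSum_deltaV w).mapL d).mapL (innerSL ℂ (deltaV X x))
  simp only [innerSL_apply_apply] at hs
  have heq : (fun z : X => ⟪deltaV X x, d (w z • deltaV X z)⟫_ℂ)
      = fun z : X => if z = x then entry d x x * w x else 0 := by
    funext z
    rw [map_smul, inner_smul_right]
    by_cases h : z = x
    · subst h; rw [if_pos rfl, entry, mul_comm]
    · rw [if_neg h]
      have : entry d x z = 0 := hd x z (fun hxz => h (hxz.symm))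
      rw [entry] at this
      rw [this, mul_zero]
  rw [heq] at hs
  exact hs.unique (hasSum_ite_eq x _)

lemma entry_mul_diag_left {d : Op} (a : Op) (hd : IsDiagonalOp d) (x y : X) :
    entry (d * a) x y = entry d x x * entry a x y := by
  rw [entry, ContinuousLinearMap.mul_apply, inner_diag_apply hd, coord_eq]

end RoeAux2
namespace RoeAux3
open RoeAux RoeAux2

variable {X : Type*}

local notation "Op" => (H2 X →L[ℂ] H2 X)

lemma memℓp_mul (f : X → ℂ) (hf : ∀ x, ‖f x‖ ≤ 1) (v : H2 X) :
    Memℓp (fun x => f x * v x) 2 := by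
  apply memℓp_gen
  refine Summable.of_nonneg_of_le (fun x => ?_) (fun x => ?_)
    ((lp.memℓp v).summable (by norm_num))
  · positivity
  · apply Real.rpow_le_rpow (norm_nonneg _) _ (by norm_num)
    calc ‖f x * v x‖ = ‖f x‖ * ‖v x‖ := norm_mul _ _
      _ ≤ 1 * ‖v x‖ := by gcongr; exact hf x
      _ = ‖v x‖ := one_mul _

/-- Multiplication operator by a function bounded by 1. -/
def mulOp (f : X → ℂ) (hf : ∀ x, ‖f x‖ ≤ 1) : Op :=
  LinearMap.mkContinuous
    { toFun := fun v => (⟨fun x => f x * v x, memℓp_mul f hf v⟩ : H2 X)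
      map_add' := by
        intro v w
        apply lp.ext
        funext x
        simp only [lp.coeFn_add, Pi.add_apply]
        exact mul_add _ _ _
      map_smul' := by
        intro c v
        apply lp.ext
        funext x
        simp only [lp.coeFn_smul, Pi.smul_apply, RingHom.id_apply, smul_eq_mul]
        ring }
    1
    (by
      intro v
      rw [one_mul]
      refine lp.norm_le_of_tsum_le (by norm_num) (norm_nonneg v) ?_
      have hnv : ‖v‖ ^ (2:ENNReal).toReal = ∑' x, ‖v x‖ ^ (2:ENNReal).toReal :=
        lp.norm_rpow_eq_tsum (p := 2) (by norm_num) v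
      rw [hnv]
      refine Summable.tsum_le_tsum (fun x => ?_) ?_ ?_
      · apply Real.rpow_le_rpow (norm_nonneg _) _ (by norm_num)
        calc ‖f x * v x‖ = ‖f x‖ * ‖v x‖ := norm_mul _ _
          _ ≤ 1 * ‖v x‖ := by gcongr; exact hf x
          _ = ‖v x‖ := one_mul _
      · exact (memℓp_mul f hf v).summable (by norm_num)
      · exact (lp.memℓp v).summable (by norm_num))

lemma mulOp_apply (f : X → ℂ) (hf : ∀ x, ‖f x‖ ≤ 1) (v : H2 X) (x : X) :
    (mulOp f hf v) x = f x * v x := rfl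

lemma entry_mulOp (f : X → ℂ) (hf : ∀ x, ‖f x‖ ≤ 1) (x y : X) :
    entry (mulOp f hf) x y = f x * (deltaV X y) x := by
  rw [entry, inner_deltaV, mulOp_apply]

lemma isDiagonalOp_mulOp (f : X → ℂ) (hf : ∀ x, ‖f x‖ ≤ 1) :
    IsDiagonalOp (mulOp f hf) := by
  intro x y hxy
  rw [entry_mulOp, deltaV_apply_ne (fun h : x = y => hxy h), mul_zero]

lemma entry_mulOp_self (f : X → ℂ) (hf : ∀ x, ‖f x‖ ≤ 1) (x : X) :
    entry (mulOp f hf) x x = f x := by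
  rw [entry_mulOp, deltaV_apply_self, mul_one]

lemma hasPropLE_mulOp [MetricSpace X] (f : X → ℂ) (hf : ∀ x, ‖f x‖ ≤ 1) :
    HasPropLE (mulOp f hf) 0 := by
  intro x y h
  exact isDiagonalOp_mulOp f hf x y (fun he => by simp [he] at h)

end RoeAux3
namespace RoeAux4
open RoeAux RoeAux2 RoeAux3

variable {X : Type*} [MetricSpace X]

local notation "Op" => (H2 X →L[ℂ] H2 X)

lemma hasPropLE_mul_diag_right {a : Op} {r : ℝ} (ha : HasPropLE a r) {d : Op}
    (hd : IsDiagonalOp d) : HasPropLE (a * d) r := fun x y h => by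
  rw [entry_mul_diag_right a hd, ha x y h, mul_zero]

lemma hasPropLE_mul_diag_left {a : Op} {r : ℝ} (ha : HasPropLE a r) {d : Op}
    (hd : IsDiagonalOp d) : HasPropLE (d * a) r := fun x y h => by
  rw [entry_mul_diag_left a hd, ha x y h, mul_zero]

def propSubmodule (X : Type*) [MetricSpace X] : Submodule ℂ (H2 X →L[ℂ] H2 X) where
  carrier := {a : H2 X →L[ℂ] H2 X | ∃ r : ℝ, HasPropLE a r}
  add_mem' := by
    rintro a b ⟨r, hr⟩ ⟨s, hs⟩
    refine ⟨max r s, fun x y h => ?_⟩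
    rw [entry_add, hr x y (lt_of_le_of_lt (le_max_left r s) h),
      hs x y (lt_of_le_of_lt (le_max_right r s) h), add_zero]
  zero_mem' := ⟨0, fun x y _ => entry_zero x y⟩
  smul_mem' := by
    rintro c a ⟨r, hr⟩
    exact ⟨r, fun x y h => by rw [entry_smul, hr x y h, mul_zero]⟩

lemma roeSet_eq : roeSet X = ((propSubmodule X).topologicalClosure : Set Op) := by
  rw [roeSet, Submodule.topologicalClosure_coe]
  rfl

lemma mem_roe_of_prop {a : Op} (r : ℝ) (h : HasPropLE a r) : a ∈ roeSet X :=
  subset_closure ⟨r, h⟩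

lemma roe_sub {a b : Op} (ha : a ∈ roeSet X) (hb : b ∈ roeSet X) : a - b ∈ roeSet X := by
  rw [roeSet_eq] at *
  exact sub_mem ha hb

end RoeAux4
namespace RoeAux5
open RoeAux RoeAux2 RoeAux3 RoeAux4

variable {X : Type*} [MetricSpace X]

local notation "Op" => (H2 X →L[ℂ] H2 X)

omit [MetricSpace X] in
lemma chi_bound (S : Set X) (x : X) : ‖Set.indicator S (fun _ => (1:ℂ)) x‖ ≤ 1 := by
  classical
  by_cases h : x ∈ S
  · rw [Set.indicator_of_mem h]; simp
  · rw [Set.indicator_of_notMem h]; simp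

/-- The diagonal operator of multiplication by the indicator of `closedBall y (m * r)`. -/
def chiQ (y : X) (r : ℝ) (m : ℕ) : (H2 X →L[ℂ] H2 X) :=
  mulOp (Set.indicator (Metric.closedBall y ((m : ℝ) * r)) (fun _ => (1:ℂ)))
    (chi_bound _)

lemma chiQ_diag (y : X) (r : ℝ) (m : ℕ) : IsDiagonalOp (chiQ y r m) :=
  isDiagonalOp_mulOp _ _

lemma chiQ_entry (y : X) (r : ℝ) (m : ℕ) (z : X) :
    entry (chiQ y r m) z z
      = Set.indicator (Metric.closedBall y ((m : ℝ) * r)) (fun _ => (1:ℂ)) z :=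
  entry_mulOp_self _ _ z

lemma chiQ_mem_roe (y : X) (r : ℝ) (m : ℕ) : chiQ y r m ∈ roeSet X :=
  mem_roe_of_prop 0 (hasPropLE_mulOp _ _)

/-- Absorption: `Q (k+1) * (c * Q k) = c * Q k` for `c` of propagation `≤ r`. -/
lemma chiQ_absorb (y : X) {r : ℝ} {c : Op} (hc : HasPropLE c r) (k : ℕ) :
    chiQ y r (k + 1) * (c * chiQ y r k) = c * chiQ y r k := by
  apply ext_of_entry
  intro u w
  rw [entry_mul_diag_left _ (chiQ_diag y r (k+1)), entry_mul_diag_right _ (chiQ_diag y r k),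
    chiQ_entry, chiQ_entry]
  by_cases hu : u ∈ Metric.closedBall y (((k+1 : ℕ) : ℝ) * r)
  · rw [Set.indicator_of_mem hu, one_mul]
  · rw [Set.indicator_of_notMem hu, zero_mul]
    by_cases hw : w ∈ Metric.closedBall y (((k : ℕ) : ℝ) * r)
    · have hdw : dist w y ≤ (k : ℝ) * r := Metric.mem_closedBall.1 hw
      have hdu : dist u y > ((k+1 : ℕ) : ℝ) * r := lt_of_not_ge (fun h => hu (Metric.mem_closedBall.2 h))
      have : dist u w > r := by
        have htri : dist u y ≤ dist u w + dist w y := dist_triangle u w y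
        push_cast at hdu
        nlinarith
      rw [hc u w this, mul_zero]
    · rw [Set.indicator_of_notMem hw, zero_mul]

end RoeAux5
namespace RoeAux6
open RoeAux RoeAux2 RoeAux3 RoeAux4 RoeAux5

variable {X : Type*} [MetricSpace X]

local notation "Op" => (H2 X →L[ℂ] H2 X)

/-- The intermediate tuples of the multimodularity argument. -/
def Ttup (n : ℕ) (b : Fin (n+1) → Op) (y : X) (r : ℝ) (k : ℕ) : Fin (n+1) → Op :=
  fun i => if n - k ≤ (i : ℕ) then b i * chiQ y r (n - (i : ℕ)) else b i

/-- Finite propagation operators have `φ`-image of finite propagation. -/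
lemma key_prop (n : ℕ)
    (φ : (Fin (n + 1) → Op) → Op)
    (hmod : IsLinftyMultimodular n φ)
    (b : Fin (n+1) → Op) (r : ℝ) (hb : ∀ i, HasPropLE (b i) r) :
    HasPropLE (φ b) (((n+1 : ℕ) : ℝ) * r) := by
  intro x y hxy
  have hbroe : ∀ i, b i ∈ roeSet X := fun i => mem_roe_of_prop r (hb i)
  have hTroe : ∀ k i, Ttup n b y r k i ∈ roeSet X := by
    intro k i
    rw [Ttup]
    split
    · exact mem_roe_of_prop r (hasPropLE_mul_diag_right (hb i) (chiQ_diag y r _))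
    · exact hbroe i
  -- base case
  have hT0 : Ttup n b y r 0 = Function.update b (Fin.last n) (b (Fin.last n) * chiQ y r 0) := by
    funext i
    rcases eq_or_ne i (Fin.last n) with rfl | hne
    · rw [Function.update_self, Ttup]
      have h1 : ((Fin.last n : Fin (n+1)) : ℕ) = n := rfl
      rw [h1, if_pos (by omega), Nat.sub_self]
    · rw [Function.update_of_ne hne, Ttup]
      have h1 : (i : ℕ) < n := by
        have := i.isLt
        have : (i : ℕ) ≠ n := fun h => hne (Fin.ext h)
        omega
      rw [if_neg (by omega)]
  have base : φ (Ttup n b y r 0) = φ b * chiQ y r 0 := by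
    rw [hT0]
    exact (hmod (chiQ y r 0) (chiQ_diag y r 0) b hbroe).2.2
  -- inductive step
  have step : ∀ k, k < n → φ (Ttup n b y r (k+1)) = φ (Ttup n b y r k) := by
    intro k hk
    have hj : n - k - 1 < n + 1 := by omega
    set j : Fin (n+1) := ⟨n - k - 1, hj⟩ with hjdef
    have hjs : (j : ℕ) + 1 < n + 1 := by
      show (n - k - 1) + 1 < n + 1
      omega
    have hmod2 := (hmod (chiQ y r (k+1)) (chiQ_diag y r (k+1))
      (Ttup n b y r k) (hTroe k)).2.1 j hjs
    have hTkj : Ttup n b y r k j = b j := by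
      rw [Ttup]
      exact if_neg (by show ¬ (n - k ≤ n - k - 1); omega)
    have hL : Function.update (Ttup n b y r k) j (Ttup n b y r k j * chiQ y r (k+1))
        = Ttup n b y r (k+1) := by
      funext i
      rcases eq_or_ne i j with rfl | hne
      · rw [Function.update_self, hTkj, Ttup]
        rw [if_pos (by show n - (k+1) ≤ (j:ℕ); show n - (k+1) ≤ n - k - 1; omega)]
        have harg : n - (j : ℕ) = k + 1 := by show n - (n - k - 1) = k + 1; omega
        rw [harg]
      · rw [Function.update_of_ne hne, Ttup, Ttup]
        have hij : (i : ℕ) ≠ n - k - 1 := fun h => hne (Fin.ext h)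
        by_cases hcase : n - k ≤ (i : ℕ)
        · rw [if_pos hcase, if_pos (show n - (k+1) ≤ (i:ℕ) by omega)]
        · rw [if_neg hcase, if_neg (show ¬ n - (k+1) ≤ (i:ℕ) by omega)]
    set j' : Fin (n+1) := (⟨(j : ℕ) + 1, hjs⟩ : Fin (n+1)) with hj'def
    have hTkj' : Ttup n b y r k j' = b j' * chiQ y r k := by
      rw [Ttup]
      rw [if_pos (by show n - k ≤ (j:ℕ)+1; show n - k ≤ (n - k - 1) + 1; omega)]
      have harg : n - ((j' : ℕ)) = k := by show n - ((n - k - 1) + 1) = k; omega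
      rw [harg]
    have habs' : chiQ y r (k+1) * (Ttup n b y r k j') = Ttup n b y r k j' := by
      rw [hTkj']
      exact chiQ_absorb y (hb j') k
    rw [← hL, hmod2, habs', Function.update_eq_self]
  -- main induction
  have main : ∀ k, k ≤ n → φ (Ttup n b y r k) = φ b * chiQ y r 0 := by
    intro k
    induction k with
    | zero => intro _; exact base
    | succ k ih => intro hk; rw [step k (by omega), ih (by omega)]
  -- final absorption on the left
  have hTn0 : Ttup n b y r n 0 = b 0 * chiQ y r n := by
    rw [Ttup]
    have h0 : ((0 : Fin (n+1)) : ℕ) = 0 := rfl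
    rw [h0, if_pos (by omega), Nat.sub_zero]
  have hmod1 := (hmod (chiQ y r (n+1)) (chiQ_diag y r (n+1)) (Ttup n b y r n) (hTroe n)).1
  have habs0 : chiQ y r (n+1) * (Ttup n b y r n 0) = Ttup n b y r n 0 := by
    rw [hTn0]
    exact chiQ_absorb y (hb 0) n
  rw [habs0, Function.update_eq_self] at hmod1
  have hfin : chiQ y r (n+1) * (φ b * chiQ y r 0) = φ b * chiQ y r 0 := by
    rw [← main n le_rfl]
    exact hmod1
  -- read off the entries
  have h1 : entry (φ b * chiQ y r 0) x y = entry (φ b) x y := by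
    rw [entry_mul_diag_right _ (chiQ_diag y r 0), chiQ_entry]
    have hy : y ∈ Metric.closedBall y (((0:ℕ) : ℝ) * r) := by
      rw [Metric.mem_closedBall, dist_self]
      simp
    rw [Set.indicator_of_mem hy, one_mul]
  have h2 : entry (chiQ y r (n+1) * (φ b * chiQ y r 0)) x y = 0 := by
    rw [entry_mul_diag_left _ (chiQ_diag y r (n+1)), chiQ_entry]
    have hx : x ∉ Metric.closedBall y (((n+1 : ℕ) : ℝ) * r) := by
      rw [Metric.mem_closedBall]
      push_neg
      exact hxy
    rw [Set.indicator_of_notMem hx, zero_mul]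
  rw [← h1, ← hfin, h2]

end RoeAux6
section FinalAux
open RoeAux RoeAux2 RoeAux3 RoeAux4 RoeAux5 RoeAux6

variable {X : Type*} [MetricSpace X]

lemma hasPropLE_mono {a : H2 X →L[ℂ] H2 X} {r s : ℝ} (h : HasPropLE a r) (hrs : r ≤ s) :
    HasPropLE a s := fun x y hxy => h x y (lt_of_le_of_lt hrs hxy)

end FinalAux
/-- A bounded multilinear `ℓ^∞(X)`-multimodular map on the uniform Roe algebra
of a bounded geometry space takes its values in the uniform Roe algebra. -/
theorem multimodular_image_in_roe
    {X : Type*} [MetricSpace X] (hX : BoundedGeometry X) (n : ℕ)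
    (φ : (Fin (n + 1) → (H2 X →L[ℂ] H2 X)) → (H2 X →L[ℂ] H2 X))
    (hφ : IsBddMultilinearOnRoe (n + 1) φ)
    (hmod : IsLinftyMultimodular n φ) :
    ∀ a : Fin (n + 1) → (H2 X →L[ℂ] H2 X), (∀ i, a i ∈ roeSet X) →
      φ a ∈ roeSet X := by
  
  classical
  intro a ha
  obtain ⟨⟨C, hC⟩, hadd, _⟩ := hφ
  set C' : ℝ := max C 0 with hC'def
  have hC'nn : 0 ≤ C' := le_max_right _ _
  have hC' : ∀ t : Fin (n+1) → (H2 X →L[ℂ] H2 X), (∀ i, t i ∈ roeSet X) →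
      ‖φ t‖ ≤ C' * ∏ i, ‖t i‖ := by
    intro t ht
    refine (hC t ht).trans (mul_le_mul_of_nonneg_right (le_max_left _ _) ?_)
    exact Finset.prod_nonneg fun i _ => norm_nonneg _
  rw [roeSet, Metric.mem_closure_iff]
  intro ε hε
  -- constants
  set K : ℝ := 1 + ∑ i, ‖a i‖ with hKdef
  have hsumnn : (0:ℝ) ≤ ∑ i, ‖a i‖ := Finset.sum_nonneg fun i _ => norm_nonneg _
  have hK1 : (1:ℝ) ≤ K := by simp only [hKdef]; linarith
  have hKn : (0:ℝ) < K ^ n := pow_pos (lt_of_lt_of_le one_pos hK1) n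
  have haK : ∀ i, ‖a i‖ ≤ K := by
    intro i
    have h1 : ‖a i‖ ≤ ∑ j, ‖a j‖ :=
      Finset.single_le_sum (fun j _ => norm_nonneg (a j)) (Finset.mem_univ i)
    simp only [hKdef]; linarith
  set A : ℝ := ((n:ℝ)+1) * (C'+1) * K ^ n with hAdef
  have hApos : (0:ℝ) < A := by
    have h1 : (0:ℝ) < (n:ℝ)+1 := by positivity
    have h2 : (0:ℝ) < C'+1 := by linarith
    simp only [hAdef]
    exact mul_pos (mul_pos h1 h2) hKn
  set δ : ℝ := min 1 (ε / (2 * A)) with hδdef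
  have hδpos : 0 < δ := lt_min one_pos (div_pos hε (by linarith))
  have hδle : δ ≤ ε / (2 * A) := min_le_right _ _
  -- approximants
  have hex : ∀ i, ∃ c : H2 X →L[ℂ] H2 X, (∃ r : ℝ, HasPropLE c r) ∧ dist (a i) c < δ := by
    intro i
    have hmem := ha i
    rw [roeSet, Metric.mem_closure_iff] at hmem
    obtain ⟨c, hcS, hcd⟩ := hmem δ hδpos
    exact ⟨c, hcS, hcd⟩
  choose b hbS hbd using hex
  choose rf hrf using hbS
  set r : ℝ := Finset.univ.sup' Finset.univ_nonempty rf with hrdef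
  have hbprop : ∀ i, HasPropLE (b i) r :=
    fun i => hasPropLE_mono (hrf i) (Finset.le_sup' rf (Finset.mem_univ i))
  have hbroe : ∀ i, b i ∈ roeSet X := fun i => RoeAux4.mem_roe_of_prop r (hbprop i)
  have hbnorm : ∀ i, ‖a i - b i‖ ≤ δ := by
    intro i
    rw [← dist_eq_norm]
    exact (hbd i).le
  have hbK : ∀ i, ‖b i‖ ≤ K := by
    intro i
    have h1 : ‖b i‖ ≤ ‖a i‖ + ‖a i - b i‖ := by
      calc ‖b i‖ = ‖a i - (a i - b i)‖ := by congr 1; abel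
        _ ≤ ‖a i‖ + ‖a i - b i‖ := norm_sub_le _ _
    have h3 : ‖a i‖ ≤ ∑ j, ‖a j‖ :=
      Finset.single_le_sum (fun j _ => norm_nonneg (a j)) (Finset.mem_univ i)
    have h4 := hbnorm i
    have h5 : δ ≤ 1 := min_le_left _ _
    simp only [hKdef]
    linarith
  -- mixed tuples
  set m : ℕ → (Fin (n+1) → (H2 X →L[ℂ] H2 X)) :=
    fun k i => if (i : ℕ) < k then b i else a i with hmdef
  have hmroe : ∀ k i, m k i ∈ roeSet X := by
    intro k i
    simp only [hmdef]
    split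
    · exact hbroe i
    · exact ha i
  have hmK : ∀ k i, ‖m k i‖ ≤ K := by
    intro k i
    simp only [hmdef]
    split
    · exact hbK i
    · exact haK i
  have hm0 : m 0 = a := by
    funext i
    simp only [hmdef]
    rw [if_neg (Nat.not_lt_zero _)]
  have hmlast : m (n+1) = b := by
    funext i
    simp only [hmdef]
    rw [if_pos i.isLt]
  set D : ℝ := C' * (δ * K ^ n) with hDdef
  have hDnn : 0 ≤ D := by positivity
  -- one telescoping step
  have hstep : ∀ k : ℕ, k < n + 1 → ‖φ (m k) - φ (m (k+1))‖ ≤ D := by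
    intro k hk
    set kF : Fin (n+1) := ⟨k, hk⟩ with hkFdef
    have hmk : Function.update (m k) kF (a kF) = m k := by
      funext i
      rcases eq_or_ne i kF with rfl | hne
      · rw [Function.update_self]
        simp only [hmdef, hkFdef]
        rw [if_neg (by omega)]
      · rw [Function.update_of_ne hne]
    have hmk1 : m (k+1) = Function.update (m k) kF (b kF) := by
      funext i
      rcases eq_or_ne i kF with rfl | hne
      · rw [Function.update_self]
        simp only [hmdef, hkFdef]
        rw [if_pos (by omega)]
      · rw [Function.update_of_ne hne]
        simp only [hmdef]
        have hik : (i : ℕ) ≠ k := fun h => hne (Fin.ext (by rw [h, hkFdef]))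
        by_cases hc : (i : ℕ) < k
        · rw [if_pos hc, if_pos (by omega)]
        · rw [if_neg hc, if_neg (by omega)]
    have hsub : a kF - b kF ∈ roeSet X := RoeAux4.roe_sub (ha kF) (hbroe kF)
    have hsplit := hadd (m k) (hmroe k) kF (a kF - b kF) (b kF) hsub (hbroe kF)
    have hiba : a kF - b kF + b kF = a kF := by abel
    rw [hiba, hmk, ← hmk1] at hsplit
    -- hsplit : φ (m k) = φ (update (m k) kF (a kF - b kF)) + φ (m (k+1))
    have hdiff : φ (m k) - φ (m (k+1)) = φ (Function.update (m k) kF (a kF - b kF)) := by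
      rw [hsplit]; abel
    rw [hdiff]
    have hupmem : ∀ i, Function.update (m k) kF (a kF - b kF) i ∈ roeSet X := by
      intro i
      rcases eq_or_ne i kF with rfl | hne
      · rw [Function.update_self]; exact hsub
      · rw [Function.update_of_ne hne]; exact hmroe k i
    refine (hC' _ hupmem).trans ?_
    simp only [hDdef]
    refine mul_le_mul_of_nonneg_left ?_ hC'nn
    have hprod : ∏ i, ‖Function.update (m k) kF (a kF - b kF) i‖
        = ‖a kF - b kF‖ * ∏ i ∈ Finset.univ.erase kF,
            ‖Function.update (m k) kF (a kF - b kF) i‖ := by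
      rw [← Finset.mul_prod_erase Finset.univ _ (Finset.mem_univ kF), Function.update_self]
    rw [hprod]
    have hca : (Finset.univ.erase kF).card = n := by
      rw [Finset.card_erase_of_mem (Finset.mem_univ kF), Finset.card_univ, Fintype.card_fin]
      omega
    have hpr2 : ∏ i ∈ Finset.univ.erase kF, ‖Function.update (m k) kF (a kF - b kF) i‖
        ≤ K ^ n := by
      calc ∏ i ∈ Finset.univ.erase kF, ‖Function.update (m k) kF (a kF - b kF) i‖
          ≤ ∏ _i ∈ Finset.univ.erase kF, K := by
            refine Finset.prod_le_prod (fun i _ => norm_nonneg _) (fun i hi => ?_)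
            rw [Function.update_of_ne (Finset.ne_of_mem_erase hi)]
            exact hmK k i
        _ = K ^ n := by rw [Finset.prod_const, hca]
    exact mul_le_mul (hbnorm kF) hpr2 (Finset.prod_nonneg fun i _ => norm_nonneg _) hδpos.le
  -- telescoping
  have htel : ∀ k : ℕ, ‖φ a - φ (m k)‖ ≤ k * D := by
    intro k
    induction k with
    | zero => rw [hm0, sub_self, norm_zero, Nat.cast_zero, zero_mul]
    | succ k ih =>
      rcases le_or_gt (n+1) k with hge | hlt
      · have hmeq : m (k+1) = m k := by
          funext i
          simp only [hmdef]
          have := i.isLt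
          rw [if_pos (by omega), if_pos (by omega)]
        rw [hmeq]
        refine ih.trans ?_
        push_cast
        have hk1 : (k:ℝ) ≤ (k:ℝ)+1 := by linarith
        exact mul_le_mul_of_nonneg_right hk1 hDnn
      · have h1 : ‖φ a - φ (m (k+1))‖ ≤ ‖φ a - φ (m k)‖ + ‖φ (m k) - φ (m (k+1))‖ := by
          have heq : φ a - φ (m (k+1)) = (φ a - φ (m k)) + (φ (m k) - φ (m (k+1))) := by abel
          rw [heq]; exact norm_add_le _ _
        have h3 := hstep k hlt
        push_cast
        push_cast at ih
        linarith
  have hfinal : ‖φ a - φ b‖ ≤ ((n:ℝ)+1) * D := by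
    have h := htel (n+1)
    rw [hmlast] at h
    push_cast at h
    linarith
  have hlt : ((n:ℝ)+1) * D < ε := by
    have h1 : ((n:ℝ)+1) * C' * K ^ n ≤ A := by
      simp only [hAdef]
      have h2 : ((n:ℝ)+1) * C' ≤ ((n:ℝ)+1) * (C'+1) :=
        mul_le_mul_of_nonneg_left (by linarith) (by positivity)
      exact mul_le_mul_of_nonneg_right h2 hKn.le
    have hs1 : ((n:ℝ)+1) * D ≤ A * δ := by
      calc ((n:ℝ)+1) * D = (((n:ℝ)+1) * C' * K ^ n) * δ := by simp only [hDdef]; ring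
        _ ≤ A * δ := mul_le_mul_of_nonneg_right h1 hδpos.le
    have heqA : A * (ε / (2 * A)) = ε / 2 := by
      rw [mul_comm (2:ℝ) A, ← mul_div_assoc, mul_div_mul_left ε 2 (ne_of_gt hApos)]
    have hs2 : A * δ ≤ ε / 2 := by
      have := mul_le_mul_of_nonneg_left hδle hApos.le
      rw [heqA] at this
      exact this
    linarith
  refine ⟨φ b, ?_, ?_⟩
  · exact ⟨((n+1 : ℕ) : ℝ) * r, RoeAux6.key_prop n φ hmod b r hbprop⟩
  · rw [dist_eq_norm]
    exact lt_of_le_of_lt hfinal hlt
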